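/- arXiv:1008.4167 — 2 statements merged into one kernel-verified Lean document; each statement's English description precedes it below -/
import Mathlib

section
/- Let β and β' be real numbers with 1 < β ≤ β'. Then W(β) ⊆ W(β'). -/
/-- The shift map iterated `k` times: `(shift k w) i = w (i + k)`,
so `shift k w = w_k w_{k+1} w_{k+2} …`. -/
def shift (k : ℕ) (w : ℕ → ℕ) : ℕ → ℕ := fun i => w (i + k)

/-- Strict lexicographic order on infinite words: `v < w` iff there is an index `i`
with `v j = w j` for all `j < i` and `v i < w i`. -/
def LexLt (v w : ℕ → ℕ) : Prop := ∃ i, (∀ j < i, v j = w j) ∧ v i < w i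

/-- Weak lexicographic order: `v ≤ w` iff `v < w` or `v = w`. -/
def LexLe (v w : ℕ → ℕ) : Prop := LexLt v w ∨ v = w

/-- A word is a bounded sequence of natural numbers. -/
def IsWord (w : ℕ → ℕ) : Prop := ∃ M, ∀ i, w i ≤ M

/-- `fword w β = ∑_{i ≥ 0} w_i β^{-(i+1)} = w_0/β + w_1/β² + …`. -/
noncomputable def fword (w : ℕ → ℕ) (β : ℝ) : ℝ := ∑' i : ℕ, (w i : ℝ) / β ^ (i + 1)

open Classical in
/-- `B̂(w)`: zero for the zero word, and otherwise `inf {β > 1 : f_w(β) ≤ 1}`. -/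
noncomputable def Bhat (w : ℕ → ℕ) : ℝ :=
  if w = fun _ => 0 then 0 else sInf {β : ℝ | 1 < β ∧ fword w β ≤ 1}

/-- `B̄(w) = sup_{j ≥ 0} B̂(σ^j w)`. -/
noncomputable def Bbar (w : ℕ → ℕ) : ℝ := ⨆ j : ℕ, Bhat (shift j w)

/-- The sequence `A_i` in the β-expansion of `β`: `A_0 = β`, `A_{i+1} = β (A_i - ⌊A_i⌋)`. -/
noncomputable def betaA (β : ℝ) : ℕ → ℝ
  | 0 => β
  | i + 1 => β * (betaA β i - (⌊betaA β i⌋₊ : ℝ))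

/-- The β-expansion of `β`: the word `a` with `a_i = ⌊A_i⌋`. -/
noncomputable def betaExp (β : ℝ) : ℕ → ℕ := fun i => ⌊betaA β i⌋₊

/-- The domain `W(β)` of the β-shift: all words `w` with `σ^k w < a` lexicographically
for every `k ≥ 0`, where `a` is the β-expansion of `β`. -/
def Wset (β : ℝ) : Set (ℕ → ℕ) :=
  {w | IsWord w ∧ ∀ k : ℕ, LexLt (shift k w) (betaExp β)}

/-- `π` is a permutation of `{1, …, n}` (viewed as a map `ℕ → ℕ`). -/
def IsPerm (n : ℕ) (π : ℕ → ℕ) : Prop := Set.BijOn π (Set.Icc 1 n) (Set.Icc 1 n)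

/-- The word `w` induces the permutation `π` of `{1, …, n}`: for all `1 ≤ i, j ≤ n`,
`π(i) < π(j)` iff `σ^{i-1} w < σ^{j-1} w` lexicographically. -/
def Induces (n : ℕ) (w : ℕ → ℕ) (π : ℕ → ℕ) : Prop :=
  ∀ i ∈ Set.Icc 1 n, ∀ j ∈ Set.Icc 1 n,
    (π i < π j ↔ LexLt (shift (i - 1) w) (shift (j - 1) w))

/-- `π ∈ Al(Σ_β)`: some word in `W(β)` induces `π`. -/
def Allowed (β : ℝ) (n : ℕ) (π : ℕ → ℕ) : Prop := ∃ w ∈ Wset β, Induces n w π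

/-- The shift-complexity `B(π) = inf {β > 1 : π ∈ Al(Σ_β)}`. -/
noncomputable def Bperm (n : ℕ) (π : ℕ → ℕ) : ℝ :=
  sInf {β : ℝ | 1 < β ∧ Allowed β n π}

/-- `ρ_m` is the permutation `1 m 2 (m-1) 3 (m-2) …` of `{1, …, m}`:
`ρ(2i-1) = i` and `ρ(2i) = m+1-i`. -/
def IsRho (m : ℕ) (ρ : ℕ → ℕ) : Prop :=
  IsPerm m ρ ∧ (∀ i, 1 ≤ i → 2 * i - 1 ≤ m → ρ (2 * i - 1) = i) ∧
    (∀ i, 1 ≤ i → 2 * i ≤ m → ρ (2 * i) = m + 1 - i)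

theorem lexLt_trans' {x a a' : ℕ → ℕ} (h1 : LexLt x a) (h2 : LexLt a a') : LexLt x a' := by
  obtain ⟨i, hi, hxi⟩ := h1
  obtain ⟨i', hi', hai⟩ := h2
  rcases lt_or_ge i i' with h | h
  · exact ⟨i, fun j hj => (hi j hj).trans (hi' j (hj.trans h)), (hi' i h) ▸ hxi⟩
  · refine ⟨i', fun j hj => (hi j (hj.trans_le h)).trans (hi' j hj), ?_⟩
    have hle : x i' ≤ a i' := by
      rcases lt_or_eq_of_le h with h' | h'
      · exact (hi i' h').le
      · rw [h']; exact hxi.le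
    exact hle.trans_lt hai

theorem betaA_nonneg' {β : ℝ} (hβ : 1 < β) : ∀ i, 0 ≤ betaA β i
  | 0 => by simp only [betaA]; linarith
  | i + 1 => by
      have h := betaA_nonneg' hβ i
      simp only [betaA]
      exact mul_nonneg (by linarith) (sub_nonneg.2 (Nat.floor_le h))

theorem betaA_le' {β β' : ℝ} (hβ : 1 < β) (hle : β ≤ β') :
    ∀ i, (∀ j < i, betaExp β j = betaExp β' j) → betaA β i ≤ betaA β' i
  | 0, _ => hle
  | i + 1, h => by
      have ih := betaA_le' hβ hle i (fun j hj => h j (hj.trans (Nat.lt_succ_self i)))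
      have heq : betaExp β i = betaExp β' i := h i (Nat.lt_succ_self i)
      have hf : (⌊betaA β i⌋₊ : ℝ) = ⌊betaA β' i⌋₊ := by
        unfold betaExp at heq; exact_mod_cast heq
      have h0 := betaA_nonneg' hβ i
      have hsub : (0:ℝ) ≤ betaA β i - ⌊betaA β i⌋₊ := sub_nonneg.2 (Nat.floor_le h0)
      simp only [betaA]
      exact mul_le_mul hle (by linarith) hsub (by linarith)

theorem betaExp_lexLe {β β' : ℝ} (hβ : 1 < β) (hle : β ≤ β') :
    LexLe (betaExp β) (betaExp β') := by
  by_cases h : ∀ i, betaExp β i = betaExp β' i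
  · exact Or.inr (funext h)
  · push_neg at h
    left
    classical
    have hne := Nat.find_spec h
    have hmin : ∀ j < Nat.find h, betaExp β j = betaExp β' j := fun j hj => by
      by_contra hc; exact absurd hj (Nat.find_min' h hc).not_gt
    have hA := betaA_le' hβ hle (Nat.find h) hmin
    exact ⟨Nat.find h, hmin, lt_of_le_of_ne (Nat.floor_mono hA) hne⟩


/-- If `1 < β ≤ β'`, then `W(β) ⊆ W(β')`. -/
theorem stmt_13 (β β' : ℝ) (hβ : 1 < β) (hββ' : β ≤ β') : Wset β ⊆ Wset β' := by
  intro w hw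
  refine ⟨hw.1, fun k => ?_⟩
  have h1 := hw.2 k
  rcases betaExp_lexLe hβ hββ' with h2 | h2
  · exact lexLt_trans' h1 h2
  · rwa [h2] at h1
end

section
/- Let w and z be words such that σ^j w ≤ z lexicographically for every j ≥ 0. Then B̂(σ^j w) ≤ B̂(z) for every j ≥ 0. -/
section Aux16

lemma shift_shift' (m k : ℕ) (w : ℕ → ℕ) : shift m (shift k w) = shift (m + k) w := by
  funext i; simp [shift, add_assoc]

lemma shift_zero' (w : ℕ → ℕ) : shift 0 w = w := by funext i; simp [shift]

lemma summable_word {w : ℕ → ℕ} {β : ℝ} (hw : IsWord w) (hβ : 1 < β) :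
    Summable (fun i : ℕ => (w i : ℝ) / β ^ (i + 1)) := by
  obtain ⟨M, hM⟩ := hw
  have hβ0 : (0:ℝ) < β := lt_trans one_pos hβ
  have hr1 : (1:ℝ)/β < 1 := by rw [div_lt_one hβ0]; exact hβ
  have hr0 : (0:ℝ) ≤ 1/β := by positivity
  have hs : Summable (fun i : ℕ => ((M:ℝ) * (1/β)) * (1/β)^i) :=
    (summable_geometric_of_lt_one hr0 hr1).mul_left _
  refine Summable.of_nonneg_of_le (fun i => by positivity) (fun i => ?_) hs
  have h1 : ((M:ℝ) * (1/β)) * (1/β)^i = (M:ℝ) / β ^ (i+1) := by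
    rw [mul_assoc, ← pow_succ', one_div_pow, mul_one_div]
  rw [h1]
  apply div_le_div_of_nonneg_right _ (by positivity)
  exact_mod_cast hM i

lemma fword_nonneg {w : ℕ → ℕ} {β : ℝ} (hβ : 1 < β) : 0 ≤ fword w β :=
  tsum_nonneg fun i => by positivity

lemma fword_le_of_bound {w : ℕ → ℕ} {β : ℝ} {M : ℕ} (hM : ∀ i, w i ≤ M) (hβ : 1 < β) :
    fword w β ≤ (M : ℝ) / (β - 1) := by
  have hβ0 : (0:ℝ) < β := lt_trans one_pos hβ
  have hr1 : (1:ℝ)/β < 1 := by rw [div_lt_one hβ0]; exact hβ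
  have hr0 : (0:ℝ) ≤ 1/β := by positivity
  have hs : Summable (fun i : ℕ => ((M:ℝ) * (1/β)) * (1/β)^i) :=
    (summable_geometric_of_lt_one hr0 hr1).mul_left _
  have hle : fword w β ≤ ∑' i : ℕ, ((M:ℝ) * (1/β)) * (1/β)^i := by
    refine Summable.tsum_le_tsum (fun i => ?_) (summable_word ⟨M, hM⟩ hβ) hs
    have h1 : ((M:ℝ) * (1/β)) * (1/β)^i = (M:ℝ) / β ^ (i+1) := by
      rw [mul_assoc, ← pow_succ', one_div_pow, mul_one_div]
    rw [h1]
    apply div_le_div_of_nonneg_right _ (by positivity)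
    exact_mod_cast hM i
  refine hle.trans ?_
  rw [tsum_mul_left, tsum_geometric_of_lt_one hr0 hr1]
  have hβ1 : (1 : ℝ) - 1/β ≠ 0 := by linarith
  have hb : β - 1 ≠ 0 := by linarith
  have heq : (M:ℝ) * (1/β) * (1 - 1/β)⁻¹ = (M:ℝ) / (β - 1) := by
    field_simp
  exact le_of_eq heq

lemma fword_split {w : ℕ → ℕ} {β : ℝ} (hw : IsWord w) (hβ : 1 < β) (n : ℕ) :
    fword w β = (∑ j ∈ Finset.range n, (w j : ℝ) / β ^ (j + 1))
      + (1 / β ^ n) * fword (shift n w) β := by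
  have hβ0 : (0:ℝ) < β := lt_trans one_pos hβ
  have hsum := summable_word hw hβ
  have h1 := Summable.sum_add_tsum_nat_add (f := fun i : ℕ => (w i : ℝ) / β ^ (i + 1)) n hsum
  rw [fword, ← h1]
  congr 1
  rw [fword, ← tsum_mul_left]
  refine tsum_congr fun i => ?_
  show (w (i + n) : ℝ) / β ^ (i + n + 1) = 1 / β ^ n * ((shift n w i : ℝ) / β ^ (i + 1))
  have : shift n w i = w (i + n) := rfl
  rw [this]
  have hpow : β ^ (i + n + 1) = β ^ n * β ^ (i + 1) := by
    rw [← pow_add]; ring_nf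
  rw [hpow]
  field_simp

lemma isWord_shift {w : ℕ → ℕ} (k : ℕ) (hw : IsWord w) : IsWord (shift k w) := by
  obtain ⟨M, hM⟩ := hw; exact ⟨M, fun i => hM _⟩

lemma key_lemma {w z : ℕ → ℕ} {β : ℝ} (hβ : 1 < β) (hw : IsWord w)
    (hz : IsWord z) (hfz : fword z β ≤ 1) (h : ∀ k : ℕ, LexLe (shift k w) z) :
    ∀ k : ℕ, fword (shift k w) β ≤ 1 := by
  obtain ⟨M, hM⟩ := hw
  have hβ0 : (0:ℝ) < β := lt_trans one_pos hβ
  set S := ⨆ k : ℕ, fword (shift k w) β with hS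
  have hbdd : BddAbove (Set.range fun k : ℕ => fword (shift k w) β) := by
    refine ⟨(M : ℝ) / (β - 1), ?_⟩
    rintro x ⟨k, rfl⟩
    exact fword_le_of_bound (fun i => hM _) hβ
  have hle : ∀ k, fword (shift k w) β ≤ S := fun k => le_ciSup hbdd k
  have hstep : ∀ k, fword (shift k w) β ≤ max 1 (1 + (S - 1) / β) := by
    intro k
    rcases h k with hlt | heq
    · obtain ⟨i, hpre, hi⟩ := hlt
      have hsplit := fword_split (isWord_shift k ⟨M, hM⟩) hβ (i + 1)
      have hshift : shift (i + 1) (shift k w) = shift (i + 1 + k) w := shift_shift' _ _ _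
      -- bound the partial sum
      have hsum : (∑ j ∈ Finset.range (i + 1), (shift k w j : ℝ) / β ^ (j + 1))
          ≤ (∑ j ∈ Finset.range (i + 1), (z j : ℝ) / β ^ (j + 1)) - 1 / β ^ (i + 1) := by
        rw [Finset.sum_range_succ, Finset.sum_range_succ]
        have h1 : (∑ j ∈ Finset.range i, (shift k w j : ℝ) / β ^ (j + 1))
            = ∑ j ∈ Finset.range i, (z j : ℝ) / β ^ (j + 1) := by
          refine Finset.sum_congr rfl fun j hj => ?_
          rw [hpre j (Finset.mem_range.mp hj)]
        have h2 : (shift k w i : ℝ) ≤ (z i : ℝ) - 1 := by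
          have h2' : shift k w i + 1 ≤ z i := hi
          have h2'' := (Nat.cast_le (α := ℝ)).mpr h2'
          push_cast at h2''
          linarith
        have h3 : (shift k w i : ℝ) / β ^ (i + 1) ≤ (z i : ℝ) / β ^ (i + 1) - 1 / β ^ (i + 1) := by
          rw [← sub_div]
          exact div_le_div_of_nonneg_right h2 (by positivity)
        linarith
      have hzsum : (∑ j ∈ Finset.range (i + 1), (z j : ℝ) / β ^ (j + 1)) ≤ fword z β := by
        exact Summable.sum_le_tsum _ (fun j _ => by positivity) (summable_word hz hβ)
      have htail : fword (shift (i + 1 + k) w) β ≤ S := hle _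
      have hpow : β ≤ β ^ (i + 1) := by
        calc β = β ^ 1 := (pow_one β).symm
        _ ≤ β ^ (i + 1) := pow_le_pow_right₀ (le_of_lt hβ) (by omega)
      have hbound : fword (shift k w) β ≤ 1 + (S - 1) / β ^ (i + 1) := by
        rw [hsplit, hshift]
        have : (1 / β ^ (i+1)) * fword (shift (i+1+k) w) β ≤ (1 / β ^ (i+1)) * S :=
          mul_le_mul_of_nonneg_left htail (by positivity)
        have hchain : (∑ j ∈ Finset.range (i + 1), (shift k w j : ℝ) / β ^ (j + 1))
            + (1 / β ^ (i+1)) * fword (shift (i+1+k) w) β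
            ≤ fword z β - 1 / β ^ (i+1) + (1 / β ^ (i+1)) * S := by
          linarith
        refine hchain.trans ?_
        have : fword z β - 1 / β ^ (i+1) + (1 / β ^ (i+1)) * S
            = fword z β + (S - 1) / β ^ (i+1) := by ring
        rw [this]
        linarith
      rcases le_or_gt 1 S with hS1 | hS1
      · refine le_max_of_le_right ?_
        have : (S - 1) / β ^ (i + 1) ≤ (S - 1) / β :=
          div_le_div_of_nonneg_left (by linarith) hβ0 hpow
        linarith
      · refine le_max_of_le_left ?_
        have : (S - 1) / β ^ (i + 1) ≤ 0 := by
          apply div_nonpos_of_nonpos_of_nonneg (by linarith) (by positivity)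
        linarith
    · rw [heq]; exact le_max_of_le_left hfz
  have hSmax : S ≤ max 1 (1 + (S - 1) / β) := ciSup_le hstep
  have hS1 : S ≤ 1 := by
    rcases max_cases 1 (1 + (S - 1) / β) with ⟨hm, _⟩ | ⟨hm, hm2⟩
    · rw [hm] at hSmax; exact hSmax
    · rw [hm] at hSmax
      have h2 : S * β ≤ (1 + (S - 1) / β) * β := mul_le_mul_of_nonneg_right hSmax hβ0.le
      have h3 : (1 + (S - 1) / β) * β = β + S - 1 := by field_simp; ring
      rw [h3] at h2
      nlinarith
  exact fun k => (hle k).trans hS1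

lemma Bset_nonempty {z : ℕ → ℕ} (hz : IsWord z) :
    ∃ β : ℝ, 1 < β ∧ fword z β ≤ 1 := by
  obtain ⟨M, hM⟩ := hz
  have hM0 : (0:ℝ) ≤ (M:ℝ) := Nat.cast_nonneg M
  have h1 : (1:ℝ) < (M:ℝ) + 2 := by linarith
  refine ⟨(M : ℝ) + 2, h1, ?_⟩
  refine (fword_le_of_bound hM h1).trans ?_
  rw [div_le_one (by linarith)]
  linarith

/-- Let `w` and `z` be words such that `σ^j w ≤ z` lexicographically for
every `j ≥ 0`. Then `B̂(σ^j w) ≤ B̂(z)` for every `j ≥ 0`. -/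
theorem stmt_16 (w z : ℕ → ℕ) (hw : IsWord w) (hz : IsWord z)
    (h : ∀ j : ℕ, LexLe (shift j w) z) :
    ∀ j : ℕ, Bhat (shift j w) ≤ Bhat z := by
  intro j
  by_cases hz0 : z = fun _ => 0
  · have hwz : shift j w = fun _ => 0 := by
      rcases h j with hlt | heq
      · exfalso
        obtain ⟨i, _, hi⟩ := hlt
        rw [hz0] at hi
        exact Nat.not_lt_zero _ hi
      · rw [heq, hz0]
    rw [Bhat, Bhat, if_pos hwz, if_pos hz0]
  · obtain ⟨β₀, hβ₀1, hβ₀⟩ := Bset_nonempty hz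
    have hne : {β : ℝ | 1 < β ∧ fword z β ≤ 1}.Nonempty := ⟨β₀, hβ₀1, hβ₀⟩
    have hBz1 : (1:ℝ) ≤ sInf {β : ℝ | 1 < β ∧ fword z β ≤ 1} :=
      le_csInf hne fun b hb => hb.1.le
    by_cases hw0 : shift j w = fun _ => 0
    · rw [Bhat, Bhat, if_pos hw0, if_neg hz0]
      linarith
    · rw [Bhat, Bhat, if_neg hw0, if_neg hz0]
      refine csInf_le_csInf ⟨1, fun x hx => hx.1.le⟩ hne fun β hβ => ?_
      obtain ⟨hβ1, hβle⟩ := hβ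
      refine ⟨hβ1, ?_⟩
      have hall : ∀ k : ℕ, LexLe (shift k (shift j w)) z := by
        intro k; rw [shift_shift']; exact h (k + j)
      have := key_lemma hβ1 (isWord_shift j hw) hz hβle hall 0
      rwa [shift_zero'] at this

end Aux16
end
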